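/- arXiv:2104.10750 — 6 statements merged into one kernel-verified Lean document; each statement's English description precedes it below -/
import Mathlib

section
/- Let a > 0. The function pen_a(x) = -log(log(1 + a/x²)) is strictly concave on the interval (0, ∞), i.e., its second derivative is strictly negative for all x > 0. -/
open Real Set

-- key inequality: 2t < (2+t) log(1+t) for t > 0
lemma key_ineq (t : ℝ) (ht : 0 < t) : 2 * t < (2 + t) * Real.log (1 + t) := by
  set ψ : ℝ → ℝ := fun t => (2 + t) * Real.log (1 + t) - 2 * t with hψ
  have hder : ∀ s : ℝ, 0 < s →
      HasDerivAt ψ (Real.log (1 + s) + (2 + s) / (1 + s) - 2) s := by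
    intro s hs
    have h1 : HasDerivAt (fun t : ℝ => 1 + t) 1 s := by
      simpa using (hasDerivAt_id s).const_add 1
    have hlog : HasDerivAt (fun t : ℝ => Real.log (1 + t)) (1 / (1 + s)) s := by
      simpa using h1.log (by linarith)
    have h2 : HasDerivAt (fun t : ℝ => 2 + t) 1 s := by
      simpa using (hasDerivAt_id s).const_add 2
    have := (h2.mul hlog).sub ((hasDerivAt_id s).const_mul 2)
    refine this.congr_deriv ?_
    ring
  have hmono : StrictMonoOn ψ (Set.Ici 0) := by
    apply strictMonoOn_of_deriv_pos (convex_Ici 0)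
    · apply ContinuousOn.sub
      · apply ContinuousOn.mul (by fun_prop)
        apply ContinuousOn.log (by fun_prop)
        intro x hx
        simp only [Set.mem_Ici] at hx
        nlinarith
      · fun_prop
    · intro s hs
      rw [interior_Ici] at hs
      simp only [Set.mem_Ioi] at hs
      rw [(hder s hs).deriv]
      -- log(1+s) > s/(1+s) = 2 - (2+s)/(1+s)
      have h1s : (0:ℝ) < 1 + s := by linarith
      have := Real.log_lt_sub_one_of_pos (x := 1/(1+s)) (by positivity)
        (by intro h; rw [div_eq_one_iff_eq (by linarith)] at h; linarith)
      rw [Real.log_div one_ne_zero (by linarith), Real.log_one] at this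
      have hlog : Real.log (1 + s) > 1 - 1/(1+s) := by linarith
      have : 1 - 1/(1+s) = s/(1+s) := by field_simp; ring
      rw [this] at hlog
      have : (2 + s)/(1 + s) = 2 - s/(1+s) := by field_simp; ring
      rw [this]
      linarith
  have := hmono (Set.self_mem_Ici) (Set.mem_Ici.2 ht.le) ht
  simp only [hψ, Real.log_one, add_zero, mul_zero, sub_zero, mul_zero] at this
  simpa using by linarith [this]

theorem stmt_2 (a : ℝ) (ha : 0 < a) :
    StrictConcaveOn ℝ (Set.Ioi (0 : ℝ))
      (fun x : ℝ => -Real.log (Real.log (1 + a / x ^ 2))) ∧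
    ∀ x : ℝ, 0 < x →
      deriv (deriv (fun x : ℝ => -Real.log (Real.log (1 + a / x ^ 2)))) x < 0 := by
  set f : ℝ → ℝ := fun x => -Real.log (Real.log (1 + a / x ^ 2)) with hf
  set L : ℝ → ℝ := fun x => Real.log (1 + a / x ^ 2) with hLdef
  have hgpos : ∀ x : ℝ, 0 < x → 1 < 1 + a / x ^ 2 := by
    intro x hx; have : 0 < a / x ^ 2 := by positivity
    linarith
  have hLpos : ∀ x : ℝ, 0 < x → 0 < L x := fun x hx =>
    Real.log_pos (hgpos x hx)
  have hL : ∀ x : ℝ, 0 < x →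
      HasDerivAt L (-2 * a / (x * (a + x ^ 2))) x := by
    intro x hx
    have hx2 : (x:ℝ) ^ 2 ≠ 0 := by positivity
    have hg : HasDerivAt (fun x : ℝ => 1 + a / x ^ 2)
        ((0 * x ^ 2 - a * (2 * x ^ 1)) / (x ^ 2) ^ 2) x := by
      exact ((hasDerivAt_const x a).div (hasDerivAt_pow 2 x) hx2).const_add 1
    have hgne : 1 + a / x ^ 2 ≠ 0 := by nlinarith [hgpos x hx]
    have := hg.log hgne
    convert this using 1
    field_simp
    ring
  have hF : ∀ x : ℝ, 0 < x →
      HasDerivAt f (2 * a / (x * (a + x ^ 2) * L x)) x := by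
    intro x hx
    have := ((hL x hx).log (hLpos x hx).ne').neg
    refine this.congr_deriv ?_
    have hx0 : x ≠ 0 := hx.ne'
    have hax : x * (a + x ^ 2) ≠ 0 := by positivity
    field_simp
  -- derivative of F1
  set F1 : ℝ → ℝ := fun x => 2 * a / (x * (a + x ^ 2) * L x) with hF1def
  have hDpos : ∀ x : ℝ, 0 < x → 0 < x * (a + x ^ 2) * L x := by
    intro x hx
    have := hLpos x hx
    positivity
  have hD' : ∀ x : ℝ, 0 < x →
      HasDerivAt (fun x => x * (a + x ^ 2) * L x)
        ((a + 3 * x ^ 2) * L x - 2 * a) x := by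
    intro x hx
    have hu : HasDerivAt (fun x : ℝ => x * (a + x ^ 2))
        (1 * (a + x ^ 2) + x * (0 + 2 * x ^ 1)) x :=
      (hasDerivAt_id x).mul ((hasDerivAt_const x a).add (hasDerivAt_pow 2 x))
    have := hu.mul (hL x hx)
    refine this.congr_deriv ?_
    have hax : x * (a + x ^ 2) ≠ 0 := by positivity
    field_simp
    ring
  have hkey : ∀ x : ℝ, 0 < x → 0 < (a + 3 * x ^ 2) * L x - 2 * a := by
    intro x hx
    have hx2 : (0:ℝ) < x ^ 2 := by positivity
    set t := a / x ^ 2 with htdef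
    have ht : 0 < t := by positivity
    have hk := key_ineq t ht
    have hlog : 0 < Real.log (1 + t) := Real.log_pos (by linarith)
    have hat : a = t * x ^ 2 := by rw [htdef]; field_simp
    have hLx : L x = Real.log (1 + t) := rfl
    rw [hLx, hat]
    nlinarith [mul_pos hx2 (sub_pos.2 hk), mul_pos hx2 hlog]
  have hF1' : ∀ x : ℝ, 0 < x → deriv F1 x < 0 := by
    intro x hx
    have hD := hD' x hx
    have hDne : x * (a + x ^ 2) * L x ≠ 0 := (hDpos x hx).ne'
    have h : HasDerivAt F1 _ x := ((hasDerivAt_const x (2 * a)).div hD hDne)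
    rw [h.deriv]
    have hnum : 0 * (x * (a + x ^ 2) * L x) - 2 * a * ((a + 3 * x ^ 2) * L x - 2 * a) < 0 := by
      have := hkey x hx
      nlinarith
    have hden : 0 < (x * (a + x ^ 2) * L x) ^ 2 := by positivity
    exact div_neg_of_neg_of_pos hnum hden
  have hderiv_eq : ∀ x : ℝ, 0 < x → deriv (deriv f) x = deriv F1 x := by
    intro x hx
    apply Filter.EventuallyEq.deriv_eq
    filter_upwards [Ioi_mem_nhds hx] with y hy
    exact (hF y hy).deriv
  have hmain : ∀ x : ℝ, 0 < x → deriv (deriv f) x < 0 := by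
    intro x hx
    rw [hderiv_eq x hx]
    exact hF1' x hx
  refine ⟨?_, hmain⟩
  apply strictConcaveOn_of_deriv2_neg (convex_Ioi 0)
  · intro x hx
    exact (hF x hx).differentiableAt.continuousAt.continuousWithinAt
  · intro x hx
    rw [interior_Ioi] at hx
    simpa [Function.iterate_succ, Function.comp] using hmain x hx
end

section
/- For any a > 0 and ω ≠ 0, the first derivative of the horseshoe-like penalty pen_a(ω) = -log(log(1 + a/ω²)) satisfies |pen_a'(ω)| < 2/|ω|. -/
theorem stmt_4 (a : ℝ) (ha : 0 < a) (ω : ℝ) (hω : ω ≠ 0) :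
    |deriv (fun x : ℝ => -Real.log (Real.log (1 + a / x ^ 2))) ω| < 2 / |ω| := by
  have hω2 : (0:ℝ) < ω ^ 2 := by positivity
  set t : ℝ := a / ω ^ 2 with ht
  have htpos : 0 < t := by positivity
  have hu1 : (1:ℝ) < 1 + t := by linarith
  have hupos : (0:ℝ) < 1 + t := by linarith
  have hlogpos : 0 < Real.log (1 + t) := Real.log_pos hu1
  have hkey : t < (1 + t) * Real.log (1 + t) := by
    have h1 : Real.log (1 + t)⁻¹ < (1 + t)⁻¹ - 1 := by
      apply Real.log_lt_sub_one_of_pos (by positivity)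
      intro h
      have : (1:ℝ) + t = 1 := by
        field_simp at h; linarith
      linarith
    rw [Real.log_inv] at h1
    have h2 : 1 - (1 + t)⁻¹ < Real.log (1 + t) := by linarith
    nlinarith [mul_lt_mul_of_pos_right h2 hupos,
      mul_inv_cancel₀ hupos.ne']
  have hd1 : HasDerivAt (fun x : ℝ => 1 + a / x ^ 2) (-(2 * a) / ω ^ 3) ω := by
    have h : HasDerivAt (fun x : ℝ => a / x ^ 2)
        ((0 * ω ^ 2 - a * (2 * ω ^ 1)) / (ω ^ 2) ^ 2) ω :=
      (hasDerivAt_const ω a).div (hasDerivAt_pow 2 ω) hω2.ne'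
    have h' := (hasDerivAt_const ω (1:ℝ)).add h
    refine h'.congr_deriv ?_
    field_simp; ring
  have hd2 : HasDerivAt (fun x : ℝ => Real.log (1 + a / x ^ 2))
      ((-(2 * a) / ω ^ 3) / (1 + t)) ω := by
    have := (Real.hasDerivAt_log hupos.ne').comp ω hd1
    refine this.congr_deriv ?_
    field_simp
  have hd3 : HasDerivAt (fun x : ℝ => -Real.log (Real.log (1 + a / x ^ 2)))
      (-(((-(2 * a) / ω ^ 3) / (1 + t)) / Real.log (1 + t))) ω := by
    have := ((Real.hasDerivAt_log hlogpos.ne').comp ω hd2).neg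
    refine this.congr_deriv ?_
    field_simp
  rw [hd3.deriv]
  have habs : 0 < |ω| := abs_pos.mpr hω
  have hval : |(-(((-(2 * a) / ω ^ 3) / (1 + t)) / Real.log (1 + t)))|
      = 2 * a / (|ω| ^ 3 * ((1 + t) * Real.log (1 + t))) := by
    rw [abs_neg, abs_div, abs_div, abs_div, abs_neg, abs_pow,
      abs_of_pos hupos, abs_of_pos hlogpos, abs_of_pos (by linarith : (0:ℝ) < 2 * a)]
    rw [div_div, div_div]
  rw [hval, div_lt_div_iff₀ (by positivity) habs]
  have hteq : t * ω ^ 2 = a := div_mul_cancel₀ a hω2.ne'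
  have h2 : |ω| ^ 2 = ω ^ 2 := sq_abs ω
  have h3 : |ω| ^ 3 = |ω| * ω ^ 2 := by rw [pow_succ' (|ω|) 2, h2]
  nlinarith [mul_lt_mul_of_pos_right hkey hω2, mul_pos habs hω2, mul_lt_mul_of_pos_left
    (mul_lt_mul_of_pos_right hkey hω2) habs]
end

section
/- The function π(θ | a) = (1/(2π√a))·log(1 + a/θ²), for a > 0, is a probability density on ℝ, i.e., it is nonnegative and integrates to 1 over the real line. -/
open MeasureTheory Set Filter Real Topology

private lemma aux_deriv (a c : ℝ) (ha : 0 < a) (hc : 0 < c) (hca : c ^ 2 = a)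
    (x : ℝ) (hx : x ∈ Ioi (0 : ℝ)) :
    HasDerivAt (fun x : ℝ => x * Real.log (1 + a / x ^ 2) + 2 * c * Real.arctan (x / c))
      (Real.log (1 + a / x ^ 2)) x := by
  have hx0 : (0 : ℝ) < x := hx
  have hx2 : x ^ 2 ≠ 0 := by positivity
  have hu : (0 : ℝ) < 1 + a / x ^ 2 := by positivity
  have h1 : HasDerivAt (fun x : ℝ => 1 + a / x ^ 2)
      (0 + a * (-(2 * x) / (x ^ 2) ^ 2)) x := by
    have : HasDerivAt (fun x : ℝ => x ^ 2) (2 * x) x := by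
      simpa using hasDerivAt_pow 2 x
    exact (hasDerivAt_const x (1:ℝ)).add (((this.inv hx2).const_mul a))
  have h2 : HasDerivAt (fun x : ℝ => Real.log (1 + a / x ^ 2))
      ((0 + a * (-(2 * x) / (x ^ 2) ^ 2)) / (1 + a / x ^ 2)) x := h1.log hu.ne'
  have h3 : HasDerivAt (fun x : ℝ => x * Real.log (1 + a / x ^ 2))
      (1 * Real.log (1 + a / x ^ 2) +
        x * ((0 + a * (-(2 * x) / (x ^ 2) ^ 2)) / (1 + a / x ^ 2))) x :=
    (hasDerivAt_id x).mul h2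
  have h4 : HasDerivAt (fun x : ℝ => 2 * c * Real.arctan (x / c))
      (2 * c * (1 / (1 + (x / c) ^ 2) * (1 / c))) x := by
    have hd : HasDerivAt (fun x : ℝ => x / c) (1 / c) x := by
      simpa using (hasDerivAt_id x).div_const c
    exact ((Real.hasDerivAt_arctan (x / c)).comp x hd).const_mul (2 * c)
  have := h3.add h4
  refine this.congr_deriv ?_
  have hxa : x ^ 2 + a ≠ 0 := by positivity
  have hcc : (1 : ℝ) + (x / c) ^ 2 ≠ 0 := by positivity
  have hc' : c ≠ 0 := hc.ne'
  field_simp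
  subst hca
  ring

private lemma aux_top (a c : ℝ) (ha : 0 < a) (hc : 0 < c) :
    Tendsto (fun x : ℝ => x * Real.log (1 + a / x ^ 2) + 2 * c * Real.arctan (x / c))
      atTop (𝓝 (Real.pi * c)) := by
  have h1 : Tendsto (fun x : ℝ => x * Real.log (1 + a / x ^ 2)) atTop (𝓝 0) := by
    have hub : Tendsto (fun x : ℝ => a / x) atTop (𝓝 0) :=
      tendsto_const_nhds.div_atTop tendsto_id
    refine tendsto_of_tendsto_of_tendsto_of_le_of_le' tendsto_const_nhds hub ?_ ?_
    · filter_upwards [eventually_gt_atTop (0:ℝ)] with x hx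
      have : (0:ℝ) ≤ a / x ^ 2 := by positivity
      exact mul_nonneg hx.le (Real.log_nonneg (by linarith))
    · filter_upwards [eventually_gt_atTop (0:ℝ)] with x hx
      have hu : (0 : ℝ) < 1 + a / x ^ 2 := by positivity
      have h := Real.log_le_sub_one_of_pos hu
      have : x * Real.log (1 + a / x ^ 2) ≤ x * (a / x ^ 2) :=
        mul_le_mul_of_nonneg_left (by linarith) hx.le
      calc x * Real.log (1 + a / x ^ 2) ≤ x * (a / x ^ 2) := this
        _ = a / x := by field_simp
  have h2 : Tendsto (fun x : ℝ => 2 * c * Real.arctan (x / c)) atTop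
      (𝓝 (2 * c * (Real.pi / 2))) := by
    have hdiv : Tendsto (fun x : ℝ => x / c) atTop atTop :=
      tendsto_id.atTop_div_const hc
    exact ((Real.tendsto_arctan_atTop.mono_right nhdsWithin_le_nhds).comp hdiv).const_mul _
  have := h1.add h2
  convert this using 2
  ring

private lemma aux_cont (a c : ℝ) (ha : 0 < a) (hc : 0 < c) :
    ContinuousWithinAt
      (fun x : ℝ => x * Real.log (1 + a / x ^ 2) + 2 * c * Real.arctan (x / c))
      (Ici (0:ℝ)) 0 := by
  rw [← continuousWithinAt_Ioi_iff_Ici]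
  have hval : (fun x : ℝ => x * Real.log (1 + a / x ^ 2) + 2 * c * Real.arctan (x / c)) 0
      = 0 := by simp
  unfold ContinuousWithinAt
  rw [hval]
  have h2 : Tendsto (fun x : ℝ => 2 * c * Real.arctan (x / c)) (𝓝[>] (0:ℝ)) (𝓝 0) := by
    have : Tendsto (fun x : ℝ => 2 * c * Real.arctan (x / c)) (𝓝 (0:ℝ))
        (𝓝 (2 * c * Real.arctan (0 / c))) := by
      exact (continuous_const.mul (Real.continuous_arctan.comp (continuous_id.div_const c))).tendsto 0
    simpa using this.mono_left nhdsWithin_le_nhds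
  have h1 : Tendsto (fun x : ℝ => x * Real.log (1 + a / x ^ 2)) (𝓝[>] (0:ℝ)) (𝓝 0) := by
    have key : Tendsto (fun x : ℝ => x * Real.log (x ^ 2 + a) - 2 * (Real.log x * x))
        (𝓝[>] (0:ℝ)) (𝓝 0) := by
      have ha1 : Tendsto (fun x : ℝ => x * Real.log (x ^ 2 + a)) (𝓝[>] (0:ℝ))
          (𝓝 (0 * Real.log (0 ^ 2 + a))) := by
        refine Tendsto.mono_left ?_ nhdsWithin_le_nhds
        exact (continuous_id.mul (((continuous_pow 2).add continuous_const).log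
          (by intro x; show x ^ 2 + a ≠ 0; positivity))).tendsto 0
      have ha2 : Tendsto (fun x : ℝ => Real.log x * x) (𝓝[>] (0:ℝ)) (𝓝 0) := by
        have := tendsto_log_mul_rpow_nhdsGT_zero (r := 1) one_pos
        refine this.congr' ?_
        filter_upwards [self_mem_nhdsWithin] with x hx
        rw [Real.rpow_one]
      have := ha1.sub (ha2.const_mul 2)
      simpa using this
    refine key.congr' ?_
    filter_upwards [self_mem_nhdsWithin] with x hx
    have hx0 : (0:ℝ) < x := hx
    have : 1 + a / x ^ 2 = (x ^ 2 + a) / x ^ 2 := by field_simp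
    rw [this, Real.log_div (by positivity) (by positivity), Real.log_pow]
    push_cast
    ring
  simpa using h1.add h2

theorem stmt_6 (a : ℝ) (ha : 0 < a) :
    (∀ θ : ℝ, 0 ≤ (1 / (2 * Real.pi * Real.sqrt a)) * Real.log (1 + a / θ ^ 2)) ∧
    ∫ θ : ℝ, (1 / (2 * Real.pi * Real.sqrt a)) * Real.log (1 + a / θ ^ 2) = 1 := by
  have hc : 0 < Real.sqrt a := Real.sqrt_pos.mpr ha
  set c := Real.sqrt a with hcdef
  have hca : c ^ 2 = a := Real.sq_sqrt ha.le
  constructor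
  · intro θ
    have h1 : (0:ℝ) ≤ 1 / (2 * Real.pi * c) := by positivity
    have h2 : (0:ℝ) ≤ a / θ ^ 2 := by positivity
    exact mul_nonneg h1 (Real.log_nonneg (by linarith))
  · have hIoi : ∫ x in Ioi (0:ℝ), Real.log (1 + a / x ^ 2) = Real.pi * c := by
      have := integral_Ioi_of_hasDerivAt_of_nonneg (aux_cont a c ha hc)
        (aux_deriv a c ha hc hca) (fun x hx => by
          have hx0 : (0:ℝ) < x := hx
          have : (0:ℝ) ≤ a / x ^ 2 := by positivity
          exact Real.log_nonneg (by linarith)) (aux_top a c ha hc)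
      simpa using this
    have habs : ∫ θ : ℝ, Real.log (1 + a / θ ^ 2)
        = ∫ θ : ℝ, (fun t : ℝ => Real.log (1 + a / t ^ 2)) |θ| := by
      congr 1 with θ
      simp [sq_abs]
    rw [integral_const_mul, habs,
      integral_comp_abs (f := fun t : ℝ => Real.log (1 + a / t ^ 2)), hIoi]
    have hpi : Real.pi ≠ 0 := Real.pi_ne_zero
    field_simp
end

section
/- For a > 0 and ω ≠ 0, the conditional expectation of the latent scale ν given ω under the Gaussian scale mixture representation of the horseshoe-like prior equals E[ν | ω, a] = a²/((ω² + a)·ω²·log(1 + a/ω²)). -/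
open MeasureTheory Real Set

lemma lemA {b : ℝ} (hb : 0 < b) : ∫ x in Ioi (0:ℝ), Real.exp (-(b*x)) = 1/b := by
  have h := integral_exp_neg_mul_rpow (p := 1) one_pos hb
  simp only [Real.rpow_one, neg_mul] at h ⊢
  rw [h, show (-1)/(1:ℝ) = -1 by norm_num, Real.rpow_neg_one,
    show (1:ℝ)/1 + 1 = 2 by norm_num, Real.Gamma_two]
  field_simp

lemma frullani {b c : ℝ} (hb : 0 < b) (hbc : b ≤ c) :
    ∫ x in Ioi (0:ℝ), (Real.exp (-(b*x)) - Real.exp (-(c*x)))/x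
      = Real.log c - Real.log b := by
  have hc : 0 < c := hb.trans_le hbc
  have hcont : Continuous fun p : ℝ × ℝ => Real.exp (-(p.2 * p.1)) := by fun_prop
  have hinner : ∀ x ∈ Ioi (0:ℝ),
      (Real.exp (-(b*x)) - Real.exp (-(c*x)))/x = ∫ t in Ioc b c, Real.exp (-(t*x)) := by
    intro x hx
    have hx0 : x ≠ 0 := (mem_Ioi.1 hx).ne'
    rw [← intervalIntegral.integral_of_le hbc]
    have hderiv : ∀ t ∈ uIcc b c,
        HasDerivAt (fun t => -Real.exp (-(t*x))/x) (Real.exp (-(t*x))) t := by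
      intro t _
      have h1 : HasDerivAt (fun t : ℝ => -(t*x)) (-x) t :=
        ((hasDerivAt_mul_const x).neg)
      have h2 := (h1.exp.neg).div_const x
      convert h2 using 1
      exacts [rfl, rfl, rfl, by field_simp]
    rw [intervalIntegral.integral_eq_sub_of_hasDerivAt hderiv
      ((Continuous.intervalIntegrable (by fun_prop) _ _))]
    field_simp
    ring
  rw [setIntegral_congr_fun measurableSet_Ioi hinner]
  have hint : Integrable (fun p : ℝ × ℝ => Real.exp (-(p.2 * p.1)))
      ((volume.restrict (Ioi (0:ℝ))).prod (volume.restrict (Ioc b c))) := by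
    have hm : AEStronglyMeasurable (fun p : ℝ × ℝ => Real.exp (-(p.2 * p.1)))
        ((volume.restrict (Ioi (0:ℝ))).prod (volume.restrict (Ioc b c))) :=
      hcont.aestronglyMeasurable
    rw [integrable_prod_iff hm]
    refine ⟨Filter.Eventually.of_forall fun x => ?_, ?_⟩
    · exact (Continuous.integrableOn_Ioc (by fun_prop))
    · have hg : IntegrableOn (fun x => (c-b) * Real.exp (-(b*x))) (Ioi (0:ℝ)) := by
        simpa [neg_mul, IntegrableOn] using (exp_neg_integrableOn_Ioi 0 hb).const_mul (c-b)
      refine Integrable.mono hg ?_ ?_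
      · exact (hm.norm.integral_prod_right')
      · rw [ae_restrict_iff' measurableSet_Ioi]
        refine Filter.Eventually.of_forall fun x hx => ?_
        have hx0 : 0 < x := hx
        have h1 : ∫ t in Ioc b c, ‖Real.exp (-(t * x))‖
            ≤ ∫ t in Ioc b c, Real.exp (-(b*x)) := by
          refine setIntegral_mono_on ((Continuous.integrableOn_Ioc (by fun_prop)))
            (integrableOn_const measure_Ioc_lt_top.ne) measurableSet_Ioc ?_
          intro t ht
          rw [Real.norm_eq_abs, abs_of_nonneg (Real.exp_nonneg _)]
          exact Real.exp_le_exp.2 (by nlinarith [ht.1.le])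
        have h2 : ∫ t in Ioc b c, Real.exp (-(b*x)) = (c-b) * Real.exp (-(b*x)) := by
          rw [setIntegral_const, Real.volume_real_Ioc_of_le hbc, smul_eq_mul]
        rw [Real.norm_eq_abs, Real.norm_eq_abs]
        have hnn : 0 ≤ ∫ t in Ioc b c, ‖Real.exp (-(t * x))‖ :=
          integral_nonneg fun t => norm_nonneg _
        rw [abs_of_nonneg hnn, abs_of_nonneg (mul_nonneg (by linarith) (Real.exp_nonneg _))]
        calc ∫ t in Ioc b c, ‖Real.exp (-(t * x))‖ ≤ _ := h1
          _ = _ := h2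
  rw [integral_integral_swap hint]
  have : ∀ t ∈ Ioc b c, (∫ x in Ioi (0:ℝ), Real.exp (-(t * x))) = 1/t := by
    intro t ht
    exact lemA (hb.trans ht.1)
  rw [setIntegral_congr_fun measurableSet_Ioc this,
    ← intervalIntegral.integral_of_le hbc, integral_one_div
      (by rw [uIcc_of_le hbc]; rintro ⟨h1, h2⟩; linarith),
    Real.log_div hc.ne' hb.ne']

lemma integrand_eq {a ω : ℝ} (ha : 0 < a) (hω : ω ≠ 0) : ∀ ν ∈ Ioi (0:ℝ),
    Real.sqrt (ν / (Real.pi * a)) * Real.exp (-ν * ω ^ 2 / a) *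
          ((1 - Real.exp (-ν)) / (2 * Real.sqrt Real.pi * ν ^ ((3 : ℝ) / 2)))
    = (1/(2*Real.pi*Real.sqrt a)) *
        ((Real.exp (-(ω^2/a*ν)) - Real.exp (-((ω^2/a+1)*ν)))/ν) := by
  intro ν hν
  have hν0 : 0 < ν := hν
  have h32 : ν ^ ((3:ℝ)/2) = ν * Real.sqrt ν := by
    rw [show (3:ℝ)/2 = 1 + 1/2 by norm_num, Real.rpow_add hν0, Real.rpow_one,
      ← Real.sqrt_eq_rpow]
  have hexp : Real.exp (-ν * ω ^ 2 / a) * (1 - Real.exp (-ν))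
      = Real.exp (-(ω^2/a*ν)) - Real.exp (-((ω^2/a+1)*ν)) := by
    rw [mul_sub, mul_one, ← Real.exp_add,
      show -ν * ω ^ 2 / a = -(ω^2/a*ν) from by ring,
      show -(ω^2/a*ν) + -ν = -((ω^2/a+1)*ν) from by ring]
  rw [h32, Real.sqrt_div hν0.le, Real.sqrt_mul Real.pi_pos.le]
  have hsν : Real.sqrt ν ≠ 0 := by positivity
  have hsπ : Real.sqrt Real.pi ≠ 0 := by positivity
  have hsa : Real.sqrt a ≠ 0 := by positivity
  have hππ : Real.sqrt Real.pi * Real.sqrt Real.pi = Real.pi :=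
    Real.mul_self_sqrt Real.pi_pos.le
  rw [← hexp]
  set s := Real.sqrt Real.pi with hs
  rw [← hππ]
  field_simp

theorem stmt_7 (a ω : ℝ) (ha : 0 < a) (hω : ω ≠ 0) :
    (∫ ν in Set.Ioi (0 : ℝ),
        ν * (Real.sqrt (ν / (Real.pi * a)) * Real.exp (-ν * ω ^ 2 / a) *
          ((1 - Real.exp (-ν)) / (2 * Real.sqrt Real.pi * ν ^ ((3 : ℝ) / 2))))) /
    (∫ ν in Set.Ioi (0 : ℝ),
        Real.sqrt (ν / (Real.pi * a)) * Real.exp (-ν * ω ^ 2 / a) *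
          ((1 - Real.exp (-ν)) / (2 * Real.sqrt Real.pi * ν ^ ((3 : ℝ) / 2))))
    = a ^ 2 / ((ω ^ 2 + a) * ω ^ 2 * Real.log (1 + a / ω ^ 2)) := by
  set b := ω^2/a with hbdef
  set c := ω^2/a + 1 with hcdef
  have hω2 : 0 < ω^2 := by positivity
  have hb : 0 < b := div_pos hω2 ha
  have hcb : c = b + 1 := by rw [hcdef, hbdef]
  have hc : 0 < c := by rw [hcb]; linarith
  have hbc : b ≤ c := by rw [hcb]; linarith
  set C := 1/(2*Real.pi*Real.sqrt a) with hCdef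
  have hC : C ≠ 0 := by
    rw [hCdef]; positivity
  have hIb : IntegrableOn (fun x => Real.exp (-(b*x))) (Ioi (0:ℝ)) := by
    simpa [neg_mul] using exp_neg_integrableOn_Ioi 0 hb
  have hIc : IntegrableOn (fun x => Real.exp (-(c*x))) (Ioi (0:ℝ)) := by
    simpa [neg_mul] using exp_neg_integrableOn_Ioi 0 hc
  have hnum : (∫ ν in Set.Ioi (0 : ℝ),
        ν * (Real.sqrt (ν / (Real.pi * a)) * Real.exp (-ν * ω ^ 2 / a) *
          ((1 - Real.exp (-ν)) / (2 * Real.sqrt Real.pi * ν ^ ((3 : ℝ) / 2)))))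
      = C * (1/b - 1/c) := by
    rw [setIntegral_congr_fun measurableSet_Ioi (g := fun ν =>
        C * (Real.exp (-(b*ν)) - Real.exp (-(c*ν)))) ?_]
    · rw [integral_const_mul, integral_sub hIb hIc, lemA hb, lemA hc]
    · intro ν hν
      have h := integrand_eq ha hω ν hν
      have hν0 : (ν:ℝ) ≠ 0 := (mem_Ioi.1 hν).ne'
      dsimp only
      rw [h, hCdef, hbdef, hcdef]
      field_simp
  have hden : (∫ ν in Set.Ioi (0 : ℝ),
        Real.sqrt (ν / (Real.pi * a)) * Real.exp (-ν * ω ^ 2 / a) *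
          ((1 - Real.exp (-ν)) / (2 * Real.sqrt Real.pi * ν ^ ((3 : ℝ) / 2))))
      = C * (Real.log c - Real.log b) := by
    rw [setIntegral_congr_fun measurableSet_Ioi (g := fun ν =>
        C * ((Real.exp (-(b*ν)) - Real.exp (-(c*ν)))/ν)) ?_]
    · rw [integral_const_mul, frullani hb hbc]
    · intro ν hν
      dsimp only
      rw [integrand_eq ha hω ν hν, hCdef, hbdef, hcdef]
  rw [hnum, hden, mul_div_mul_left _ _ hC]
  have hlog : Real.log c - Real.log b = Real.log (1 + a/ω^2) := by
    rw [← Real.log_div hc.ne' hb.ne', hcdef, hbdef]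
    congr 1
    rw [div_eq_iff (div_ne_zero hω2.ne' ha.ne')]
    field_simp
  rw [hlog]
  have hval : 1/b - 1/c = a^2/((ω^2+a)*ω^2) := by
    rw [hbdef, hcdef]
    have : ω^2 + a ≠ 0 := by positivity
    field_simp
    ring
  rw [hval, div_div]
end

section
/- Mixing a mean-zero Gaussian N(0, a/(2ν)) over the latent scale density π(ν) = (1 - e^{-ν})/(2√π·ν^{3/2}) on (0,∞) yields the horseshoe-like marginal density: ∫_0^∞ √(ν/(πa))·exp(-ν ω²/a)·(1 - e^{-ν})/(2√π·ν^{3/2}) dν = (1/(2π√a))·log(1 + a/ω²), for all ω ≠ 0 and a > 0. -/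
open MeasureTheory Set Real

lemma frullani_exp {b c : ℝ} (hb : 0 < b) (hbc : b < c) :
    ∫ ν in Ioi (0:ℝ), (Real.exp (-(b*ν)) - Real.exp (-(c*ν)))/ν = Real.log (c/b) := by
  have hc : 0 < c := hb.trans hbc
  have key : ∀ ν ∈ Ioi (0:ℝ),
      (∫ t in Ioc b c, Real.exp (-(t*ν))) = (Real.exp (-(b*ν)) - Real.exp (-(c*ν)))/ν := by
    intro ν hν
    have hν' : (0:ℝ) < ν := hν
    rw [← intervalIntegral.integral_of_le hbc.le]
    have h1 : ∀ t : ℝ, Real.exp (-(t*ν)) = (fun x => Real.exp x) (-ν * t) := by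
      intro t; ring_nf
    simp_rw [h1]
    rw [intervalIntegral.integral_comp_mul_left (fun x => Real.exp x) (by linarith : (-ν) ≠ 0),
      integral_exp]
    rw [smul_eq_mul]
    have hν0 : ν ≠ 0 := ne_of_gt hν'
    field_simp
    ring
  have hbound : ∀ ν ∈ Ioi (0:ℝ),
      (Real.exp (-(b*ν)) - Real.exp (-(c*ν)))/ν ≤ (c - b) * Real.exp (-(b*ν)) := by
    intro ν hν
    have hν' : (0:ℝ) < ν := hν
    rw [div_le_iff₀ hν']
    have h2 : Real.exp (-(c*ν)) = Real.exp (-(b*ν)) * Real.exp (-((c-b)*ν)) := by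
      rw [← Real.exp_add]; ring_nf
    have h3 : 1 - Real.exp (-((c-b)*ν)) ≤ (c-b)*ν := by
      have := Real.add_one_le_exp (-((c-b)*ν)); linarith
    calc Real.exp (-(b*ν)) - Real.exp (-(c*ν))
        = Real.exp (-(b*ν)) * (1 - Real.exp (-((c-b)*ν))) := by rw [h2]; ring
      _ ≤ Real.exp (-(b*ν)) * ((c-b)*ν) := by
          exact mul_le_mul_of_nonneg_left h3 (Real.exp_pos _).le
      _ = (c - b) * Real.exp (-(b*ν)) * ν := by ring
  have hnonneg : ∀ ν ∈ Ioi (0:ℝ), 0 ≤ (Real.exp (-(b*ν)) - Real.exp (-(c*ν)))/ν := by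
    intro ν hν
    have hν' : (0:ℝ) < ν := hν
    apply div_nonneg _ hν'.le
    have : -(c*ν) ≤ -(b*ν) := by nlinarith
    linarith [Real.exp_le_exp.mpr this]
  have hmeas : AEStronglyMeasurable (Function.uncurry fun ν t => Real.exp (-(t*ν)))
      ((volume.restrict (Ioi 0)).prod (volume.restrict (Ioc b c))) := by
    apply Continuous.aestronglyMeasurable
    fun_prop
  have hint : Integrable (Function.uncurry fun ν t => Real.exp (-(t*ν)))
      ((volume.restrict (Ioi (0:ℝ))).prod (volume.restrict (Ioc b c))) := by
    rw [integrable_prod_iff hmeas]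
    constructor
    · filter_upwards with ν
      apply Continuous.integrableOn_Ioc
      fun_prop
    · have heq : (fun ν => ∫ t in Ioc b c, ‖Real.exp (-(t*ν))‖)
          =ᵐ[volume.restrict (Ioi (0:ℝ))]
          (fun ν => (Real.exp (-(b*ν)) - Real.exp (-(c*ν)))/ν) := by
        filter_upwards [ae_restrict_mem measurableSet_Ioi] with ν hν
        rw [← key ν hν]
        congr 1; ext t; exact Real.norm_of_nonneg (Real.exp_pos _).le
      apply Integrable.congr _ heq.symm
      apply Integrable.mono' ((exp_neg_integrableOn_Ioi 0 hb).const_mul (c - b))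
      · apply Measurable.aestronglyMeasurable
        fun_prop
      · filter_upwards [ae_restrict_mem measurableSet_Ioi] with ν hν
        rw [Real.norm_of_nonneg (hnonneg ν hν), neg_mul]
        exact hbound ν hν
  calc ∫ ν in Ioi (0:ℝ), (Real.exp (-(b*ν)) - Real.exp (-(c*ν)))/ν
      = ∫ ν in Ioi (0:ℝ), ∫ t in Ioc b c, Real.exp (-(t*ν)) :=
        (setIntegral_congr_fun measurableSet_Ioi key).symm
    _ = ∫ t in Ioc b c, ∫ ν in Ioi (0:ℝ), Real.exp (-(t*ν)) := integral_integral_swap hint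
    _ = ∫ t in Ioc b c, 1/t := by
        apply setIntegral_congr_fun measurableSet_Ioc
        intro t ht
        have ht' : 0 < t := hb.trans ht.1
        show (∫ ν in Ioi (0:ℝ), Real.exp (-(t*ν))) = 1/t
        have : (∫ ν in Ioi (0:ℝ), Real.exp (-(t*ν)))
            = ∫ ν in Ioi (0:ℝ), (fun x => Real.exp (-x)) (t * ν) := by simp
        rw [this, integral_comp_mul_left_Ioi (fun x => Real.exp (-x)) 0 ht']
        simp [integral_exp_neg_Ioi, integral_exp_Iic_zero, smul_eq_mul, one_div]
    _ = Real.log (c/b) := by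
        rw [← intervalIntegral.integral_of_le hbc.le]
        apply integral_one_div
        simp only [Set.uIcc_of_le hbc.le, Set.mem_Icc, not_and]
        intro h
        linarith

theorem stmt_8 (a ω : ℝ) (ha : 0 < a) (hω : ω ≠ 0) :
    ∫ ν in Set.Ioi (0 : ℝ),
        Real.sqrt (ν / (Real.pi * a)) * Real.exp (-ν * ω ^ 2 / a) *
          ((1 - Real.exp (-ν)) / (2 * Real.sqrt Real.pi * ν ^ ((3 : ℝ) / 2)))
      = (1 / (2 * Real.pi * Real.sqrt a)) * Real.log (1 + a / ω ^ 2) := by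
  have hω2 : 0 < ω^2 := by positivity
  have ha' : a ≠ 0 := ne_of_gt ha
  set b := ω^2 / a with hbdef
  have hb : 0 < b := by positivity
  have hbc : b < b + 1 := by linarith
  have hsa : 0 < Real.sqrt a := Real.sqrt_pos.mpr ha
  have hsp : 0 < Real.sqrt Real.pi := Real.sqrt_pos.mpr Real.pi_pos
  have hπ : Real.sqrt Real.pi * Real.sqrt Real.pi = Real.pi :=
    Real.mul_self_sqrt Real.pi_pos.le
  have heq : ∀ ν ∈ Set.Ioi (0:ℝ),
      Real.sqrt (ν / (Real.pi * a)) * Real.exp (-ν * ω ^ 2 / a) *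
          ((1 - Real.exp (-ν)) / (2 * Real.sqrt Real.pi * ν ^ ((3 : ℝ) / 2)))
        = (1 / (2 * Real.pi * Real.sqrt a)) *
            ((Real.exp (-(b*ν)) - Real.exp (-((b+1)*ν)))/ν) := by
    intro ν hν
    have hν' : (0:ℝ) < ν := hν
    have hν0 : ν ≠ 0 := ne_of_gt hν'
    have hνs : 0 < Real.sqrt ν := Real.sqrt_pos.mpr hν'
    have h32 : ν ^ ((3:ℝ)/2) = ν * Real.sqrt ν := by
      rw [show (3:ℝ)/2 = 1 + 1/2 by norm_num, Real.rpow_add hν', Real.rpow_one,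
        Real.sqrt_eq_rpow]
    have hsq : Real.sqrt (ν / (Real.pi * a))
        = Real.sqrt ν / (Real.sqrt Real.pi * Real.sqrt a) := by
      rw [Real.sqrt_div hν'.le, Real.sqrt_mul Real.pi_pos.le]
    have hexp : Real.exp (-ν * ω^2 / a) * (1 - Real.exp (-ν))
        = Real.exp (-(b*ν)) - Real.exp (-((b+1)*ν)) := by
      have e1 : -ν * ω^2 / a = -(b*ν) := by rw [hbdef]; ring
      have e2 : -ν * ω^2 / a + -ν = -((b+1)*ν) := by rw [hbdef]; ring
      rw [mul_sub, mul_one, ← Real.exp_add, e2, e1]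
    rw [h32, hsq, ← hexp, ← hπ]
    field_simp
    rw [Real.sqrt_sq hsp.le]
  rw [setIntegral_congr_fun measurableSet_Ioi heq, MeasureTheory.integral_const_mul,
    frullani_exp hb hbc]
  congr 1
  congr 1
  rw [hbdef]
  field_simp
end

section
/- The slash-normal density π(t) = (φ(0) - φ(t))/t², where φ is the standard normal density, is a Gaussian scale mixture with Pareto(1/2) mixing: π(t) = (1/2)∫_1^∞ (2πr)^{-1/2} exp(-t²/(2r)) r^{-3/2} dr for all t ≠ 0. -/
open MeasureTheory

noncomputable def stdNormalPdf (t : ℝ) : ℝ := (2 * Real.pi) ^ (-(1 : ℝ) / 2) * Real.exp (-t ^ 2 / 2)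

theorem stmt_9 (t : ℝ) (ht : t ≠ 0) :
    (stdNormalPdf 0 - stdNormalPdf t) / t ^ 2
      = (1 / 2) * ∫ r in Set.Ioi (1 : ℝ),
          (2 * Real.pi * r) ^ (-(1 : ℝ) / 2) * Real.exp (-t ^ 2 / (2 * r)) * r ^ (-(3 : ℝ) / 2) := by
  have ht2 : (0:ℝ) < t ^ 2 := by positivity
  have hpi : (0:ℝ) < 2 * Real.pi := by positivity
  set c : ℝ := (2 * Real.pi) ^ (-(1 : ℝ) / 2) with hc
  have hc0 : 0 < c := Real.rpow_pos_of_pos hpi _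
  -- antiderivative
  set G : ℝ → ℝ := fun r => c * (2 / t ^ 2) * Real.exp (-t ^ 2 / (2 * r)) with hG
  set g' : ℝ → ℝ := fun r => c * Real.exp (-t ^ 2 / (2 * r)) / r ^ 2 with hg'
  have hderiv : ∀ r ∈ Set.Ici (1:ℝ), HasDerivAt G (g' r) r := by
    intro r hr
    have hr0 : (0:ℝ) < r := lt_of_lt_of_le one_pos hr
    have heq : (fun r : ℝ => -t ^ 2 / (2 * r)) = fun r => (-t ^ 2 / 2) * r⁻¹ := by
      funext x; ring
    have h1 : HasDerivAt (fun r : ℝ => -t ^ 2 / (2 * r)) ((-t ^ 2 / 2) * (-(r ^ 2)⁻¹)) r := by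
      rw [heq]; exact (hasDerivAt_inv hr0.ne').const_mul _
    have h2 := (h1.exp.const_mul (c * (2 / t ^ 2)))
    refine h2.congr_deriv ?_
    simp only [hg']
    field_simp
  have hpos : ∀ r ∈ Set.Ioi (1:ℝ), 0 ≤ g' r := by
    intro r hr
    have hr0 : (0:ℝ) < r := lt_trans one_pos hr
    positivity
  have htend : Filter.Tendsto G Filter.atTop (nhds (c * (2 / t ^ 2))) := by
    have heq : (fun r : ℝ => -t ^ 2 / (2 * r)) = fun r => (-t ^ 2 / 2) * r⁻¹ := by
      funext x; ring
    have h0 : Filter.Tendsto (fun r : ℝ => -t ^ 2 / (2 * r)) Filter.atTop (nhds 0) := by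
      rw [heq]
      have := tendsto_inv_atTop_zero.const_mul (-t ^ 2 / 2)
      rwa [mul_zero] at this
    have : Filter.Tendsto (fun r : ℝ => Real.exp (-t ^ 2 / (2 * r))) Filter.atTop (nhds 1) := by
      simpa [Function.comp_def] using (Real.continuous_exp.tendsto 0).comp h0
    have := this.const_mul (c * (2 / t ^ 2))
    simpa using this
  have key : ∫ r in Set.Ioi (1:ℝ), g' r = c * (2 / t ^ 2) - G 1 := by
    exact integral_Ioi_of_hasDerivAt_of_nonneg' hderiv hpos htend
  have hcongr : ∫ r in Set.Ioi (1:ℝ),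
      (2 * Real.pi * r) ^ (-(1 : ℝ) / 2) * Real.exp (-t ^ 2 / (2 * r)) * r ^ (-(3 : ℝ) / 2)
      = ∫ r in Set.Ioi (1:ℝ), g' r := by
    apply setIntegral_congr_fun measurableSet_Ioi
    intro r hr
    have hr0 : (0:ℝ) < r := lt_trans one_pos hr
    have hmul : (2 * Real.pi * r) ^ (-(1 : ℝ) / 2)
        = c * r ^ (-(1:ℝ)/2) := Real.mul_rpow hpi.le hr0.le
    have hr2 : r ^ (-(1:ℝ)/2) * r ^ (-(3:ℝ)/2) = (r ^ 2)⁻¹ := by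
      rw [← Real.rpow_natCast r 2, ← Real.rpow_neg hr0.le, ← Real.rpow_add hr0]
      norm_num
    show (2 * Real.pi * r) ^ (-(1:ℝ)/2) * Real.exp (-t ^ 2 / (2 * r)) * r ^ (-(3:ℝ)/2)
        = c * Real.exp (-t ^ 2 / (2 * r)) / r ^ 2
    rw [hmul]
    conv_rhs => rw [div_eq_mul_inv, ← hr2]
    ring
  rw [hcongr, key]
  simp only [hG, stdNormalPdf]
  rw [← hc]
  field_simp
  ring_nf
  simp
end
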